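/- Let R be an exchange ring and A ∈ GL_n(R), with n ≥ 2. Then there exist matrices E, F ∈ E_n(R) such that the (1,1) entry d of EAF is a von Neumann regular element of R satisfying dR = (1 − p)R and Rd = R(1 − q) for some idempotents p, q ∈ R with RpR = RqR = R. -/

import Mathlib

universe u

/-- A unital ring `R` is an *exchange ring* if for every `a ∈ R` there exists an
idempotent `e ∈ aR` such that `1 - e ∈ (1 - a)R`. -/
def IsExchangeRing (R : Type*) [Ring R] : Prop :=
  ∀ a : R, ∃ e r s : R, IsIdempotentElem e ∧ e = a * r ∧ 1 - e = (1 - a) * s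

/-- `E_ι(R)`: the subgroup of `GL_ι(R) = (Matrix ι ι R)ˣ` generated by the elementary
matrices (transvections) `1 + r·e_{ij}`, `i ≠ j`. -/
def ElementarySubgroup (ι : Type*) [Fintype ι] [DecidableEq ι] (R : Type*) [Ring R] :
    Subgroup (Matrix ι ι R)ˣ :=
  Subgroup.closure
    {E : (Matrix ι ι R)ˣ | ∃ i j : ι, ∃ r : R, i ≠ j ∧ E.val = 1 + Matrix.single i j r}

namespace Stmt6Aux

open Matrix

variable {R : Type u} [Ring R] {n : ℕ}

/-- The transvection `1 + c·E i j` as an explicit unit. -/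
def tunit (i j : Fin n) (hij : i ≠ j) (c : R) : (Matrix (Fin n) (Fin n) R)ˣ where
  val := 1 + single i j c
  inv := 1 + single i j (-c)
  val_inv := by
    have h0 : single i j c * single i j (-c) = 0 :=
      single_mul_single_of_ne (c := c) i j i hij.symm (-c)
    rw [add_mul, mul_add, mul_add, one_mul, mul_one, h0]
    simp [add_assoc, ← single_add]
  inv_val := by
    have h0 : single i j (-c) * single i j c = 0 :=
      single_mul_single_of_ne (c := -c) i j i hij.symm c
    rw [add_mul, mul_add, mul_add, one_mul, mul_one, h0]
    simp [add_assoc, ← single_add]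

lemma tunit_mem (i j : Fin n) (hij : i ≠ j) (c : R) :
    tunit i j hij c ∈ ElementarySubgroup (Fin n) R :=
  Subgroup.subset_closure ⟨i, j, c, hij, rfl⟩

lemma tunit_val (i j : Fin n) (hij : i ≠ j) (c : R) :
    (tunit i j hij c).val = 1 + single i j c := rfl

/-- Entry of `M * (1 + c E_{k l})`. -/
lemma mul_tunit_apply (M : Matrix (Fin n) (Fin n) R) (k l : Fin n) (hkl : k ≠ l) (c : R)
    (i m : Fin n) :
    (M * (tunit k l hkl c).val) i m = M i m + if m = l then M i k * c else 0 := by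
  rw [tunit_val, mul_add, mul_one, Matrix.add_apply]
  congr 1
  by_cases h : m = l
  · subst h; simp
  · simp [Matrix.mul_single_apply_of_ne (hbj := h), h]

/-- Entry of `(1 + c E_{k l}) * M`. -/
lemma tunit_mul_apply (M : Matrix (Fin n) (Fin n) R) (k l : Fin n) (hkl : k ≠ l) (c : R)
    (i m : Fin n) :
    ((tunit k l hkl c).val * M) i m = M i m + if i = k then c * M l m else 0 := by
  rw [tunit_val, add_mul, one_mul, Matrix.add_apply]
  congr 1
  by_cases h : i = k
  · subst h; simp
  · simp [Matrix.single_mul_apply_of_ne (h := h), h]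

/-- Adding `∑_{j ∈ s} (col j)·(c j)` to column `i0` by elementary column operations. -/
lemma blockcut (i0 : Fin n) (c : Fin n → R) (s : Finset (Fin n)) (hs : i0 ∉ s)
    (M : (Matrix (Fin n) (Fin n) R)ˣ) :
    ∃ F : (Matrix (Fin n) (Fin n) R)ˣ, F ∈ ElementarySubgroup (Fin n) R ∧
      (∀ i k, k ≠ i0 → (M * F).val i k = M.val i k) ∧
      (∀ i, (M * F).val i i0 = M.val i i0 + ∑ j ∈ s, M.val i j * c j) := by
  classical
  induction s using Finset.induction_on with
  | empty =>
      exact ⟨1, one_mem _, by simp, by simp⟩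
  | @insert j s' hj ih =>
      have hji0 : j ≠ i0 := fun h => hs (h ▸ Finset.mem_insert_self j s')
      have hs' : i0 ∉ s' := fun h => hs (Finset.mem_insert_of_mem h)
      obtain ⟨F', hF'mem, hF'ne, hF'i0⟩ := ih hs'
      refine ⟨F' * tunit j i0 hji0 (c j), mul_mem hF'mem (tunit_mem _ _ _ _), ?_, ?_⟩
      · intro i k hk
        have : (M * (F' * tunit j i0 hji0 (c j))).val i k
            = ((M * F').val * (tunit j i0 hji0 (c j)).val) i k := by
          rw [← mul_assoc]; rfl
        rw [this, mul_tunit_apply, if_neg hk, add_zero, hF'ne i k hk]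
      · intro i
        have : (M * (F' * tunit j i0 hji0 (c j))).val i i0
            = ((M * F').val * (tunit j i0 hji0 (c j)).val) i i0 := by
          rw [← mul_assoc]; rfl
        rw [this, mul_tunit_apply, if_pos rfl, hF'i0 i, hF'ne i j hji0,
          Finset.sum_insert hj]
        abel

/-- Corner regularization: one exchange application plus elementary column operations turn
the `(i0,i0)` entry into `ε * a₀` where `ε` is an idempotent of the form `a₀ * w`, and the
new corner `a` satisfies `a * u = ε`. -/
lemma reg (hR : IsExchangeRing R) (i0 : Fin n) (M : (Matrix (Fin n) (Fin n) R)ˣ) :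
    ∃ F ∈ ElementarySubgroup (Fin n) R, ∃ ε u w : R,
      IsIdempotentElem ε ∧
      ε = M.val i0 i0 * w ∧
      (M * F).val i0 i0 = ε * M.val i0 i0 ∧
      (M * F).val i0 i0 * u = ε := by
  classical
  set a₀ := M.val i0 i0 with ha₀
  set N := (M⁻¹).val with hN
  have hMN : ∑ j, M.val i0 j * N j i0 = 1 := by
    have h1 : M.val * N = 1 := M.mul_inv
    have := congrFun (congrFun h1 i0) i0
    rwa [Matrix.mul_apply, Matrix.one_apply_eq] at this
  obtain ⟨ε, r, s, hidem, her, hes⟩ := hR (a₀ * N i0 i0)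
  obtain ⟨F, hFmem, hFne, hFi0⟩ :=
    blockcut i0 (fun j => N j i0 * (s * (-a₀))) (Finset.univ.erase i0)
      (Finset.notMem_erase i0 _) M
  have hsum : ∑ j ∈ Finset.univ.erase i0, M.val i0 j * (N j i0 * (s * (-a₀)))
      = s * (-a₀) - (a₀ * N i0 i0) * (s * (-a₀)) := by
    rw [Finset.sum_erase_eq_sub (Finset.mem_univ i0)]
    congr 1
    · calc ∑ j, M.val i0 j * (N j i0 * (s * (-a₀)))
          = ∑ j, (M.val i0 j * N j i0) * (s * (-a₀)) := by
            simp_rw [mul_assoc]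
        _ = (∑ j, M.val i0 j * N j i0) * (s * (-a₀)) := by rw [Finset.sum_mul]
        _ = s * (-a₀) := by rw [hMN, one_mul]
    · rw [← ha₀, mul_assoc]
  have hc : (M * F).val i0 i0 = ε * a₀ := by
    rw [hFi0 i0, hsum, ← ha₀]
    calc a₀ + (s * -a₀ - a₀ * N i0 i0 * (s * -a₀))
        = a₀ + ((1 - a₀ * N i0 i0) * s) * -a₀ := by noncomm_ring
      _ = a₀ + (1 - ε) * -a₀ := by rw [← hes]
      _ = ε * a₀ := by noncomm_ring
  refine ⟨F, hFmem, ε, N i0 i0 * (r * ε), N i0 i0 * r, hidem, ?_, hc, ?_⟩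
  · rw [her, mul_assoc]
  · rw [hc]
    have h1 : (ε * a₀) * (N i0 i0 * (r * ε)) = ε * ((a₀ * N i0 i0 * r) * ε) := by
      noncomm_ring
    rw [h1, ← her, hidem.eq, hidem.eq]

end Stmt6Aux

open Stmt6Aux in
/-- `dR = (1-p)R` is an equality of right ideals (`Submodule.span Rᵐᵒᵖ`),
`Rd = R(1-q)` an equality of left ideals (`Ideal.span`), and `RpR = RqR = R` is
expressed via `TwoSidedIdeal.span`. -/
theorem stmt6 (R : Type u) [Ring R] (hR : IsExchangeRing R) (n : ℕ) (hn : 2 ≤ n)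
    (A : (Matrix (Fin n) (Fin n) R)ˣ) :
    ∃ E F : (Matrix (Fin n) (Fin n) R)ˣ,
      E ∈ ElementarySubgroup (Fin n) R ∧ F ∈ ElementarySubgroup (Fin n) R ∧
      ∃ d : R, d = (E.val * A.val * F.val) ⟨0, by omega⟩ ⟨0, by omega⟩ ∧
        (∃ y : R, d * y * d = d) ∧
        ∃ p q : R, IsIdempotentElem p ∧ IsIdempotentElem q ∧
          Submodule.span Rᵐᵒᵖ ({d} : Set R) = Submodule.span Rᵐᵒᵖ ({1 - p} : Set R) ∧
          Ideal.span ({d} : Set R) = Ideal.span ({1 - q} : Set R) ∧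
          TwoSidedIdeal.span ({p} : Set R) = ⊤ ∧ TwoSidedIdeal.span ({q} : Set R) = ⊤ := by
  classical
  have h0n : 0 < n := by omega
  have h1n : 1 < n := by omega
  set i0 : Fin n := ⟨0, h0n⟩ with hi0
  set i1 : Fin n := ⟨1, h1n⟩ with hi1
  have h01 : i0 ≠ i1 := by simp [hi0, hi1, Fin.ext_iff]
  -- Stage 1 : regularize the corner
  obtain ⟨F₁, hF₁, e₁, u₁, w₁, he₁, hw₁, hc₁, hu₁⟩ := reg hR i0 A
  set M₁ := A * F₁ with hM₁def
  set a := M₁.val i0 i0 with hadef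
  have he₁a : e₁ * a = a := by rw [hc₁, ← mul_assoc, he₁.eq]
  -- Stage 2 : column kill
  set b₁ := M₁.val i0 i1 with hb₁def
  set TA := tunit i0 i1 h01 (u₁ * (1 - b₁)) with hTAdef
  set M₂ := M₁ * TA with hM₂def
  set b₂ := b₁ + a * (u₁ * (1 - b₁)) with hb₂def
  have hM₂01 : M₂.val i0 i1 = b₂ := by
    rw [hM₂def, Units.val_mul, mul_tunit_apply, if_pos rfl]
  have hM₂00 : M₂.val i0 i0 = a := by
    rw [hM₂def, Units.val_mul, mul_tunit_apply, if_neg h01, add_zero]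
  have he₁b₂ : e₁ * b₂ = e₁ := by
    rw [hb₂def]
    calc e₁ * (b₁ + a * (u₁ * (1 - b₁)))
        = e₁ * b₁ + (e₁ * a) * (u₁ * (1 - b₁)) := by noncomm_ring
      _ = e₁ * b₁ + a * (u₁ * (1 - b₁)) := by rw [he₁a]
      _ = e₁ * b₁ + (a * u₁) * (1 - b₁) := by rw [mul_assoc]
      _ = e₁ * b₁ + e₁ * (1 - b₁) := by rw [hu₁]
      _ = e₁ := by noncomm_ring
  set TB := tunit i1 i0 h01.symm (-a) with hTBdef
  set M₃ := M₂ * TB with hM₃def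
  set a₂ := M₃.val i0 i0 with ha₂def
  have ha₂eq : a₂ = (1 - b₂) * a := by
    rw [ha₂def, hM₃def, Units.val_mul, mul_tunit_apply, if_pos rfl, hM₂00, hM₂01]
    noncomm_ring
  have he₁a₂ : e₁ * a₂ = 0 := by
    rw [ha₂eq]
    calc e₁ * ((1 - b₂) * a) = (e₁ - e₁ * b₂) * a := by noncomm_ring
      _ = (e₁ - e₁) * a := by rw [he₁b₂]
      _ = 0 := by noncomm_ring
  -- Stage 3 : re-regularize
  obtain ⟨F₃, hF₃, ε₂, u₂, w₂, hε₂, hw₂, hc₃, hu₃⟩ := reg hR i0 M₃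
  set M₄ := M₃ * F₃ with hM₄def
  set a₃ := M₄.val i0 i0 with ha₃def
  have ha₃eq : a₃ = ε₂ * a₂ := hc₃
  have hw₂' : ε₂ = a₂ * w₂ := hw₂
  have ha₃u₂ : a₃ * u₂ = ε₂ := hu₃
  have hε₂a₃ : ε₂ * a₃ = a₃ := by rw [ha₃eq, ← mul_assoc, hε₂.eq]
  set f₂ := u₂ * a₃ with hf₂def
  have ha₃f₂ : a₃ * f₂ = a₃ := by rw [hf₂def, ← mul_assoc, ha₃u₂, hε₂a₃]
  have hf₂idem : IsIdempotentElem f₂ := by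
    show f₂ * f₂ = f₂
    calc f₂ * f₂ = u₂ * (a₃ * f₂) := by rw [hf₂def]; noncomm_ring
      _ = f₂ := by rw [ha₃f₂, hf₂def]
  have he₁a₃ : e₁ * a₃ = 0 := by
    rw [ha₃eq, hw₂']
    calc e₁ * ((a₂ * w₂) * a₂) = ((e₁ * a₂) * w₂) * a₂ := by noncomm_ring
      _ = 0 := by rw [he₁a₂]; noncomm_ring
  -- Stage 4 : row kill
  set γ₃ := M₄.val i1 i0 with hγ₃def
  set LC := tunit i1 i0 h01.symm ((1 - γ₃) * u₂) with hLCdef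
  set M₅ := LC * M₄ with hM₅def
  set γ₄ := γ₃ + (1 - γ₃) * f₂ with hγ₄def
  have hM₅10 : M₅.val i1 i0 = γ₄ := by
    rw [hM₅def, Units.val_mul, tunit_mul_apply, if_pos rfl, hγ₄def, hf₂def, mul_assoc]
  have hM₅00 : M₅.val i0 i0 = a₃ := by
    rw [hM₅def, Units.val_mul, tunit_mul_apply, if_neg h01, add_zero]
  set LD := tunit i0 i1 h01 (-a₃) with hLDdef
  set M₆ := LD * M₅ with hM₆def
  set a₄ := M₆.val i0 i0 with ha₄def
  have ha₄eq : a₄ = a₃ * (1 - γ₄) := by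
    rw [ha₄def, hM₆def, Units.val_mul, tunit_mul_apply, if_pos rfl, hM₅00, hM₅10]
    noncomm_ring
  have hγ₄f₂ : γ₄ * f₂ = f₂ := by
    rw [hγ₄def]
    calc (γ₃ + (1 - γ₃) * f₂) * f₂ = γ₃ * f₂ + (1 - γ₃) * (f₂ * f₂) := by noncomm_ring
      _ = γ₃ * f₂ + (1 - γ₃) * f₂ := by rw [hf₂idem.eq]
      _ = f₂ := by noncomm_ring
  have ha₄f₂ : a₄ * f₂ = 0 := by
    rw [ha₄eq]
    calc (a₃ * (1 - γ₄)) * f₂ = a₃ * f₂ - a₃ * (γ₄ * f₂) := by noncomm_ring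
      _ = a₃ * f₂ - a₃ * f₂ := by rw [hγ₄f₂]
      _ = 0 := by noncomm_ring
  have he₁a₄ : e₁ * a₄ = 0 := by
    rw [ha₄eq, ← mul_assoc, he₁a₃, zero_mul]
  -- Stage 5 : final re-regularization
  obtain ⟨F₅, hF₅, ε₃, u₃, w₃, hε₃, hw₃, hc₅, hu₅⟩ := reg hR i0 M₆
  set M₇ := M₆ * F₅ with hM₇def
  set d := M₇.val i0 i0 with hddef
  have hdeq : d = ε₃ * a₄ := hc₅
  have hw₃' : ε₃ = a₄ * w₃ := hw₃
  have hdu₃ : d * u₃ = ε₃ := hu₅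
  have hε₃d : ε₃ * d = d := by rw [hdeq, ← mul_assoc, hε₃.eq]
  -- key annihilation / membership facts
  have he₁ε₃ : e₁ * ε₃ = 0 := by rw [hw₃', ← mul_assoc, he₁a₄, zero_mul]
  have he₁p : e₁ * (1 - ε₃) = e₁ := by rw [mul_sub, mul_one, he₁ε₃, sub_zero]
  have ha₂e : a₂ = ((1 - b₂) * e₁) * a := by rw [mul_assoc, he₁a]; exact ha₂eq
  have hε₃form : ε₃ = (ε₂ * (1 - b₂)) * (e₁ * (a * ((1 - γ₄) * w₃))) := by
    rw [hw₃', ha₄eq, ha₃eq, ha₂e]; noncomm_ring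
  have hFqf₂ : (u₃ * d) * f₂ = 0 := by
    rw [hdeq]
    calc (u₃ * (ε₃ * a₄)) * f₂ = (u₃ * ε₃) * (a₄ * f₂) := by noncomm_ring
      _ = 0 := by rw [ha₄f₂, mul_zero]
  have hqf₂ : (1 - u₃ * d) * f₂ = f₂ := by rw [sub_mul, one_mul, hFqf₂, sub_zero]
  have ha₄fform : a₄ = a₃ * (f₂ * (1 - γ₄)) := by rw [← mul_assoc, ha₃f₂]; exact ha₄eq
  have hFqform : u₃ * d = (u₃ * (ε₃ * a₃)) * (f₂ * (1 - γ₄)) := by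
    rw [hdeq, ha₄fform]; noncomm_ring
  -- assemble
  have hqidem : IsIdempotentElem (u₃ * d) := by
    show (u₃ * d) * (u₃ * d) = u₃ * d
    calc (u₃ * d) * (u₃ * d) = u₃ * ((d * u₃) * d) := by noncomm_ring
      _ = u₃ * d := by rw [hdu₃, hε₃d]
  refine ⟨LD * LC, F₁ * TA * TB * F₃ * F₅, ?_, ?_, d, ?_, ⟨u₃, ?_⟩,
    1 - ε₃, 1 - u₃ * d, hε₃.one_sub, hqidem.one_sub, ?_, ?_, ?_, ?_⟩
  · exact mul_mem (tunit_mem _ _ _ _) (tunit_mem _ _ _ _)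
  · exact mul_mem (mul_mem (mul_mem (mul_mem hF₁ (tunit_mem _ _ _ _)) (tunit_mem _ _ _ _)) hF₃) hF₅
  · -- d is the (0,0) entry of E * A * F
    have hEAF : (LD * LC) * A * (F₁ * TA * TB * F₃ * F₅) = M₇ := by
      rw [hM₇def, hM₆def, hM₅def, hM₄def, hM₃def, hM₂def, hM₁def]; group
    calc d = M₇.val i0 i0 := hddef
      _ = ((LD * LC) * A * (F₁ * TA * TB * F₃ * F₅)).val i0 i0 := by rw [hEAF]
      _ = ((LD * LC).val * A.val * (F₁ * TA * TB * F₃ * F₅).val) i0 i0 := by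
          rw [Units.val_mul, Units.val_mul]
      _ = ((LD * LC).val * A.val * (F₁ * TA * TB * F₃ * F₅).val) ⟨0, by omega⟩ ⟨0, by omega⟩ := rfl
  · -- regularity
    rw [hdu₃, hε₃d]
  · -- right ideals : dR = ε₃R
    rw [sub_sub_cancel]
    apply le_antisymm
    · rw [Submodule.span_le, Set.singleton_subset_iff]
      rw [SetLike.mem_coe, Submodule.mem_span_singleton]
      exact ⟨MulOpposite.op a₄, by rw [op_smul_eq_mul, ← hdeq]⟩
    · rw [Submodule.span_le, Set.singleton_subset_iff]
      rw [SetLike.mem_coe, Submodule.mem_span_singleton]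
      exact ⟨MulOpposite.op u₃, by rw [op_smul_eq_mul, hdu₃]⟩
  · -- left ideals : Rd = R(u₃d)
    rw [sub_sub_cancel]
    apply le_antisymm
    · rw [Ideal.span_le, Set.singleton_subset_iff]
      rw [SetLike.mem_coe, Ideal.mem_span_singleton']
      exact ⟨d, by rw [← mul_assoc, hdu₃, hε₃d]⟩
    · rw [Ideal.span_le, Set.singleton_subset_iff]
      rw [SetLike.mem_coe, Ideal.mem_span_singleton']
      exact ⟨u₃, rfl⟩
  · -- fullness of p = 1 - ε₃
    apply TwoSidedIdeal.eq_top
    have hpmem : (1 - ε₃) ∈ TwoSidedIdeal.span ({1 - ε₃} : Set R) :=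
      TwoSidedIdeal.subset_span rfl
    have he₁mem : e₁ ∈ TwoSidedIdeal.span ({1 - ε₃} : Set R) := by
      rw [← he₁p]; exact TwoSidedIdeal.mul_mem_left _ _ _ hpmem
    have hε₃mem : ε₃ ∈ TwoSidedIdeal.span ({1 - ε₃} : Set R) := by
      have h' : (ε₂ * (1 - b₂)) * (e₁ * (a * ((1 - γ₄) * w₃)))
          ∈ TwoSidedIdeal.span ({1 - ε₃} : Set R) :=
        TwoSidedIdeal.mul_mem_left _ _ _
          (TwoSidedIdeal.mul_mem_right _ _ _ he₁mem)
      simpa only [← hε₃form] using h'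
    have h1 := TwoSidedIdeal.add_mem _ hpmem hε₃mem
    simpa only [sub_add_cancel] using h1
  · -- fullness of q = 1 - u₃d
    apply TwoSidedIdeal.eq_top
    have hqmem : (1 - u₃ * d) ∈ TwoSidedIdeal.span ({1 - u₃ * d} : Set R) :=
      TwoSidedIdeal.subset_span rfl
    have hf₂mem : f₂ ∈ TwoSidedIdeal.span ({1 - u₃ * d} : Set R) := by
      rw [← hqf₂]; exact TwoSidedIdeal.mul_mem_right _ _ _ hqmem
    have hFqmem : u₃ * d ∈ TwoSidedIdeal.span ({1 - u₃ * d} : Set R) := by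
      have h' : (u₃ * (ε₃ * a₃)) * (f₂ * (1 - γ₄))
          ∈ TwoSidedIdeal.span ({1 - u₃ * d} : Set R) :=
        TwoSidedIdeal.mul_mem_left _ _ _
          (TwoSidedIdeal.mul_mem_right _ _ _ hf₂mem)
      simpa only [← hFqform] using h'
    have h1 := TwoSidedIdeal.add_mem _ hqmem hFqmem
    simpa only [sub_add_cancel] using h1
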